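/- Let d ≥ 1, let λ : ℤ^d → ℝ satisfy λ_j ≠ λ_0 for all j ≠ 0, let α > 0 and 0 < δ < α with δ ≤ 1, and let X : ℤ^d × ℤ^d → ℂ be a matrix with ‖X − I‖_α < (δ/3)^d, where I is the identity matrix. Then the bounded operator on ℓ²(ℤ^d) defined by X is invertible, the matrix of its inverse X^{−1} (with entries ⟨e_n, X^{−1} e_m⟩ in the canonical basis) satisfies ‖X^{−1} − I‖_{α−δ} < ∞, and ‖X^{−1} − I‖_{α−δ} ≤ ‖X − I‖_α / (1 − (3/δ)^d ‖X − I‖_α). -/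

import Mathlib

open scoped ENNReal

noncomputable section

abbrev Zd (d : ℕ) := Fin d → ℤ

/-- `|k| = |k₁| + ⋯ + |k_d|` as a real number. -/
def absZ {d : ℕ} (k : Zd d) : ℝ := ∑ i, |(k i : ℝ)|

/-- The T-norm of a sequence `a : ℤ^d → ℂ` relative to the base sequence `lam`. -/
def Tnorm {d : ℕ} (lam : Zd d → ℝ) (a : Zd d → ℂ) : ℝ≥0∞ :=
  (⨆ n : Zd d, ENNReal.ofReal (‖a n‖)) +
    ⨆ n : Zd d, ⨆ j : {j : Zd d // j ≠ 0},
      ENNReal.ofReal (‖a (n + j.1) - a n‖ / |lam j.1 - lam 0|)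

/-- The α-norm of a matrix `A : ℤ^d × ℤ^d → ℂ`. -/
def matNorm {d : ℕ} (lam : Zd d → ℝ) (α : ℝ) (A : Zd d → Zd d → ℂ) : ℝ≥0∞ :=
  ⨆ k : Zd d, ENNReal.ofReal (Real.exp (α * absZ k)) * Tnorm lam (fun n => A n (n + k))

/-- The identity matrix on `ℤ^d`. -/
def idMat (d : ℕ) : Zd d → Zd d → ℂ := fun n m => if n = m then 1 else 0


set_option maxHeartbeats 1600000
namespace NA

lemma absZ_nonneg {d : ℕ} (k : Zd d) : 0 ≤ absZ k :=
  Finset.sum_nonneg fun i _ => abs_nonneg _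

lemma absZ_add_le {d : ℕ} (a b : Zd d) : absZ (a + b) ≤ absZ a + absZ b := by
  rw [absZ, absZ, absZ, ← Finset.sum_add_distrib]
  refine Finset.sum_le_sum fun i _ => ?_
  have : ((a + b) i : ℝ) = (a i : ℝ) + (b i : ℝ) := by push_cast [Pi.add_apply]; ring
  rw [this]; exact abs_add_le _ _

lemma absZ_neg {d : ℕ} (a : Zd d) : absZ (-a) = absZ a := by
  simp [absZ]

-- 1-dim geometric
lemma oneDim {t : ℝ} (ht : 0 < t) :
    HasSum (fun m : ℤ => Real.exp (-(t * |(m : ℝ)|)))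
      ((1 + Real.exp (-t)) / (1 - Real.exp (-t))) := by
  set r := Real.exp (-t) with hr
  have hr0 : 0 ≤ r := (Real.exp_pos _).le
  have hr1 : r < 1 := by
    rw [hr, Real.exp_lt_one_iff]; linarith
  have hgeo : HasSum (fun n : ℕ => r ^ n) (1 - r)⁻¹ := hasSum_geometric_of_lt_one hr0 hr1
  have hgeo2 : HasSum (fun n : ℕ => r ^ (n + 1)) (r * (1 - r)⁻¹) := by
    simpa [pow_succ, mul_comm] using hgeo.mul_left r
  have key : HasSum (fun m : ℤ => r ^ m.natAbs) ((1 - r)⁻¹ + r * (1 - r)⁻¹) := by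
    have := hgeo.int_rec hgeo2
    convert this using 1
    ext m
    cases m with
    | ofNat n => simp
    | negSucc n => simp [Int.natAbs]
  have heq : (fun m : ℤ => Real.exp (-(t * |(m : ℝ)|))) = fun m : ℤ => r ^ m.natAbs := by
    ext m
    rw [hr, ← Real.exp_nat_mul]
    congr 1
    have : |(m : ℝ)| = (m.natAbs : ℝ) := by rw [Nat.cast_natAbs, Int.cast_abs]
    rw [this]; ring
  rw [heq]
  convert key using 1
  have h1r : 0 < 1 - r := by linarith
  field_simp

lemma hasSum_expZ {d : ℕ} {t : ℝ} (ht : 0 < t) :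
    HasSum (fun k : Zd d => Real.exp (-(t * absZ k)))
      (((1 + Real.exp (-t)) / (1 - Real.exp (-t))) ^ d) := by
  induction d with
  | zero =>
      have : (fun k : Zd 0 => Real.exp (-(t * absZ k))) = fun _ => (1 : ℝ) := by
        ext k; simp [absZ]
      rw [this, pow_zero]
      simpa using hasSum_fintype (fun _ : Zd 0 => (1 : ℝ))
  | succ d ih =>
      set S := (1 + Real.exp (-t)) / (1 - Real.exp (-t)) with hS
      have h1 : HasSum (fun m : ℤ => Real.exp (-(t * |(m : ℝ)|))) S := oneDim ht
      have hprod : HasSum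
          (fun p : ℤ × Zd d => Real.exp (-(t * |(p.1 : ℝ)|)) * Real.exp (-(t * absZ p.2)))
          (S * S ^ d) := by
        refine h1.mul ih ?_
        exact h1.summable.mul_of_nonneg ih.summable
          (fun _ => (Real.exp_pos _).le) (fun _ => (Real.exp_pos _).le)
      let e : ℤ × Zd d ≃ Zd (d + 1) := Fin.consEquiv (fun _ : Fin (d+1) => ℤ)
      rw [pow_succ']
      rw [← e.hasSum_iff]
      convert hprod using 1
      ext ⟨a, k⟩
      have hep : e (a, k) = Fin.cons a k := rfl
      have habs : absZ (e (a, k)) = |(a : ℝ)| + absZ k := by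
        rw [hep, absZ, Fin.sum_univ_succ]
        simp [absZ]
      rw [Function.comp_apply, habs, ← Real.exp_add]
      ring_nf

lemma summable_expZ {d : ℕ} {t : ℝ} (ht : 0 < t) :
    Summable (fun k : Zd d => Real.exp (-(t * absZ k))) := (hasSum_expZ ht).summable

lemma oneDimConst_le {t : ℝ} (ht : 0 < t) (ht1 : t ≤ 1) :
    (1 + Real.exp (-t)) / (1 - Real.exp (-t)) ≤ 3 / t := by
  set r := Real.exp (-t) with hrdef
  have h1t : (0:ℝ) < 1 + t := by linarith
  have hexp : 1 + t ≤ Real.exp t := by linarith [Real.add_one_le_exp t]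
  have hr : r ≤ 1 / (1 + t) := by
    rw [hrdef, Real.exp_neg, one_div]
    exact inv_anti₀ h1t hexp
  have hrpos : 0 < r := Real.exp_pos _
  have hd : t / (1 + t) ≤ 1 - r := by
    have : r ≤ 1 / (1+t) := hr
    have h : 1 - 1/(1+t) = t/(1+t) := by field_simp; ring
    linarith [h]
  have hdpos : 0 < t / (1 + t) := div_pos ht h1t
  have hnum : 1 + r ≤ (2 + t) / (1 + t) := by
    have h : 1 + 1/(1+t) = (2+t)/(1+t) := by field_simp; ring
    linarith
  calc (1 + r) / (1 - r) ≤ ((2 + t) / (1 + t)) / (t / (1 + t)) :=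
        div_le_div₀ (by positivity) hnum hdpos hd
    _ = (2 + t) / t := by field_simp
    _ ≤ 3 / t := by gcongr <;> linarith

lemma tsum_expZ_le {d : ℕ} {t : ℝ} (ht : 0 < t) (ht1 : t ≤ 1) :
    (∑' k : Zd d, Real.exp (-(t * absZ k))) ≤ (3 / t) ^ d := by
  rw [(hasSum_expZ ht).tsum_eq]
  have h0 : 0 ≤ (1 + Real.exp (-t)) / (1 - Real.exp (-t)) := by
    have hr1 : Real.exp (-t) < 1 := by rw [Real.exp_lt_one_iff]; linarith
    have : 0 < 1 - Real.exp (-t) := by linarith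
    positivity
  exact pow_le_pow_left₀ h0 (oneDimConst_le ht ht1) d

/-! ### Core setup -/

def matMul {d : ℕ} (A B : Zd d → Zd d → ℂ) : Zd d → Zd d → ℂ := fun n m => ∑' l, A n l * B l m

def Bdd {d : ℕ} (lam : Zd d → ℝ) (P Q : Zd d → ℝ) (A : Zd d → Zd d → ℂ) : Prop :=
  (∀ n m, ‖A n m‖ ≤ P (m - n)) ∧
  (∀ n m j, j ≠ (0 : Zd d) →
    ‖A (n + j) (m + j) - A n m‖ ≤ Q (m - n) * |lam j - lam 0|)

def Good {d : ℕ} (lam : Zd d → ℝ) (γ c : ℝ) (A : Zd d → Zd d → ℂ) : Prop :=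
  ∃ P Q : Zd d → ℝ, (∀ k, 0 ≤ P k) ∧ (∀ k, 0 ≤ Q k) ∧
    (∀ k, P k + Q k ≤ c * Real.exp (-(γ * absZ k))) ∧ Bdd lam P Q A

def Esum (d : ℕ) (δ : ℝ) : ℝ := ∑' k : Zd d, Real.exp (-(δ * absZ k))

lemma absZ_triangle {d : ℕ} (k t : Zd d) : absZ k ≤ absZ t + absZ (k - t) := by
  have h2 : t + (k - t) = k := by abel
  calc absZ k = absZ (t + (k - t)) := by rw [h2]
    _ ≤ absZ t + absZ (k - t) := absZ_add_le _ _

lemma exp_conv {d : ℕ} {α δ : ℝ} (hγ : 0 ≤ α - δ) (k t : Zd d) :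
    Real.exp (-(α * absZ t)) * Real.exp (-((α - δ) * absZ (k - t)))
      ≤ Real.exp (-((α - δ) * absZ k)) * Real.exp (-(δ * absZ t)) := by
  rw [← Real.exp_add, ← Real.exp_add, Real.exp_le_exp]
  have h1 : (0:ℝ) ≤ absZ t + absZ (k - t) - absZ k := by linarith [absZ_triangle k t]
  nlinarith [mul_nonneg hγ h1]

lemma summable_shift {d : ℕ} {f : Zd d → ℝ} (h : Summable f) (n : Zd d) :
    Summable (fun l : Zd d => f (l - n)) :=
  (Equiv.subRight n).summable_iff.mpr h

lemma summable_conv_pro {d : ℕ} {α δ : ℝ} (hδ : 0 < δ) (hγ : 0 ≤ α - δ) (k : Zd d) :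
    Summable (fun t : Zd d =>
      Real.exp (-(α * absZ t)) * Real.exp (-((α - δ) * absZ (k - t)))) := by
  refine Summable.of_nonneg_of_le (fun t => by positivity) (fun t => exp_conv hγ k t) ?_
  exact (summable_expZ hδ).mul_left _

lemma tsum_conv_pro_le {d : ℕ} {α δ : ℝ} (hδ : 0 < δ) (hγ : 0 ≤ α - δ) (k : Zd d) :
    (∑' t : Zd d, Real.exp (-(α * absZ t)) * Real.exp (-((α - δ) * absZ (k - t))))
      ≤ Esum d δ * Real.exp (-((α - δ) * absZ k)) := by
  have h1 := Summable.tsum_le_tsum (fun t => exp_conv hγ k t) (summable_conv_pro hδ hγ k)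
    ((summable_expZ hδ).mul_left _)
  rw [tsum_mul_left] at h1
  rw [Esum, mul_comm]
  exact h1

lemma Esum_nonneg (d : ℕ) (δ : ℝ) : 0 ≤ Esum d δ :=
  tsum_nonneg fun _ => (Real.exp_pos _).le

lemma Esum_le {d : ℕ} {δ : ℝ} (hδ : 0 < δ) (hδ1 : δ ≤ 1) : Esum d δ ≤ (3 / δ) ^ d :=
  tsum_expZ_le hδ hδ1

/-! ### matNorm ↔ Good -/

lemma good_of_matNorm {d : ℕ} {lam : Zd d → ℝ} {β c : ℝ} {A : Zd d → Zd d → ℂ}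
    (hc : 0 ≤ c) (hl : ∀ j : Zd d, j ≠ 0 → lam j ≠ lam 0)
    (h : matNorm lam β A ≤ ENNReal.ofReal c) : Good lam β c A := by
  have hm : ∀ k : Zd d, ENNReal.ofReal (Real.exp (β * absZ k)) *
      Tnorm lam (fun n => A n (n + k)) ≤ ENNReal.ofReal c := fun k =>
    le_trans (le_iSup (fun k => ENNReal.ofReal (Real.exp (β * absZ k)) *
      Tnorm lam (fun n => A n (n + k))) k) h
  have hT : ∀ k : Zd d, Tnorm lam (fun n => A n (n + k)) ≤
      ENNReal.ofReal (c * Real.exp (-(β * absZ k))) := by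
    intro k
    set e := Real.exp (β * absZ k) with he
    have he0 : 0 < e := Real.exp_pos _
    have hx0 : ENNReal.ofReal e ≠ 0 := by
      simp [ENNReal.ofReal_eq_zero, not_le, he0]
    have hxt : ENNReal.ofReal e ≠ ⊤ := ENNReal.ofReal_ne_top
    calc Tnorm lam (fun n => A n (n + k))
        = (ENNReal.ofReal e)⁻¹ * (ENNReal.ofReal e * Tnorm lam (fun n => A n (n + k))) := by
          rw [← mul_assoc, ENNReal.inv_mul_cancel hx0 hxt, one_mul]
      _ ≤ (ENNReal.ofReal e)⁻¹ * ENNReal.ofReal c := mul_le_mul_right (hm k) _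
      _ = ENNReal.ofReal (e⁻¹ * c) := by
          rw [ENNReal.ofReal_mul (by positivity), ENNReal.ofReal_inv_of_pos he0]
      _ = ENNReal.ofReal (c * Real.exp (-(β * absZ k))) := by
          rw [← Real.exp_neg, mul_comm]
  -- split Tnorm into its two parts
  have hsplit : ∀ k : Zd d,
      (⨆ n : Zd d, ENNReal.ofReal (‖A n (n + k)‖)) +
      (⨆ n : Zd d, ⨆ j : {j : Zd d // j ≠ 0},
        ENNReal.ofReal (‖A (n + j.1) ((n + j.1) + k) - A n (n + k)‖ /
          |lam j.1 - lam 0|)) ≤ ENNReal.ofReal (c * Real.exp (-(β * absZ k))) := by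
    intro k; exact hT k
  refine ⟨fun k => (⨆ n : Zd d, ENNReal.ofReal (‖A n (n + k)‖)).toReal,
    fun k => (⨆ n : Zd d, ⨆ j : {j : Zd d // j ≠ 0},
        ENNReal.ofReal (‖A (n + j.1) ((n + j.1) + k) - A n (n + k)‖ /
          |lam j.1 - lam 0|)).toReal,
    fun k => ENNReal.toReal_nonneg, fun k => ENNReal.toReal_nonneg, ?_, ?_, ?_⟩
  · intro k
    have h1 := hsplit k
    have hf1 : (⨆ n : Zd d, ENNReal.ofReal (‖A n (n + k)‖)) ≠ ⊤ :=
      ne_top_of_le_ne_top ENNReal.ofReal_ne_top (le_trans le_self_add h1)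
    have hf2 : (⨆ n : Zd d, ⨆ j : {j : Zd d // j ≠ 0},
        ENNReal.ofReal (‖A (n + j.1) ((n + j.1) + k) - A n (n + k)‖ /
          |lam j.1 - lam 0|)) ≠ ⊤ :=
      ne_top_of_le_ne_top ENNReal.ofReal_ne_top (le_trans le_add_self h1)
    rw [← ENNReal.toReal_add hf1 hf2]
    exact ENNReal.toReal_le_of_le_ofReal (by positivity) h1
  · intro n m
    have hk : n + (m - n) = m := by abel
    have h2 : ENNReal.ofReal (‖A n (n + (m - n))‖) ≤
        ⨆ n' : Zd d, ENNReal.ofReal (‖A n' (n' + (m - n))‖) :=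
      le_iSup (fun n' => ENNReal.ofReal (‖A n' (n' + (m - n))‖)) n
    have hf : (⨆ n' : Zd d, ENNReal.ofReal (‖A n' (n' + (m - n))‖)) ≠ ⊤ :=
      ne_top_of_le_ne_top ENNReal.ofReal_ne_top (le_trans le_self_add (hsplit (m - n)))
    have h3 := ENNReal.toReal_mono hf h2
    rw [ENNReal.toReal_ofReal (norm_nonneg _), hk] at h3
    exact h3
  · intro n m j hj
    have hk : (n + j) + (m - n) = m + j := by abel
    have hlam : 0 < |lam j - lam 0| := abs_pos.mpr (sub_ne_zero.mpr (hl j hj))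
    have h2 : ENNReal.ofReal (‖A (n + j) ((n + j) + (m - n)) - A n (n + (m - n))‖ /
          |lam j - lam 0|) ≤
        ⨆ n' : Zd d, ⨆ j' : {j' : Zd d // j' ≠ 0},
          ENNReal.ofReal (‖A (n' + j'.1) ((n' + j'.1) + (m - n)) - A n' (n' + (m - n))‖ /
            |lam j'.1 - lam 0|) := by
      refine le_trans ?_ (le_iSup _ n)
      exact le_iSup (fun j' : {j' : Zd d // j' ≠ 0} =>
        ENNReal.ofReal (‖A (n + j'.1) ((n + j'.1) + (m - n)) - A n (n + (m - n))‖ /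
          |lam j'.1 - lam 0|)) ⟨j, hj⟩
    have hf : (⨆ n' : Zd d, ⨆ j' : {j' : Zd d // j' ≠ 0},
        ENNReal.ofReal (‖A (n' + j'.1) ((n' + j'.1) + (m - n)) - A n' (n' + (m - n))‖ /
          |lam j'.1 - lam 0|)) ≠ ⊤ :=
      ne_top_of_le_ne_top ENNReal.ofReal_ne_top (le_trans le_add_self (hsplit (m - n)))
    have h3 := ENNReal.toReal_mono hf h2
    rw [ENNReal.toReal_ofReal (by positivity), hk] at h3
    have hk2 : n + (m - n) = m := by abel
    rw [hk2] at h3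
    rw [div_le_iff₀ hlam] at h3
    exact h3

lemma matNorm_of_good {d : ℕ} {lam : Zd d → ℝ} {γ c : ℝ} {A : Zd d → Zd d → ℂ}
    (hg : Good lam γ c A) : matNorm lam γ A ≤ ENNReal.ofReal c := by
  obtain ⟨P, Q, hP, hQ, hPQ, hB1, hB2⟩ := hg
  refine iSup_le fun k => ?_
  have hs1 : (⨆ n : Zd d, ENNReal.ofReal (‖A n (n + k)‖)) ≤
      ENNReal.ofReal (P k) := by
    refine iSup_le fun n => ENNReal.ofReal_le_ofReal ?_
    have := hB1 n (n + k)
    simpa using this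
  have hs2 : (⨆ n : Zd d, ⨆ j : {j : Zd d // j ≠ 0},
      ENNReal.ofReal (‖A (n + j.1) ((n + j.1) + k) - A n (n + k)‖ /
        |lam j.1 - lam 0|)) ≤ ENNReal.ofReal (Q k) := by
    refine iSup_le fun n => iSup_le fun j => ENNReal.ofReal_le_ofReal ?_
    have h2 := hB2 n (n + k) j.1 j.2
    have hk : (n + k) + j.1 = (n + j.1) + k := by abel
    rw [hk] at h2
    have hk2 : n + k - n = k := by abel
    rw [hk2] at h2
    rcases eq_or_lt_of_le (abs_nonneg (lam j.1 - lam 0)) with hz | hz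
    · rw [← hz, div_zero]; exact hQ k
    · rw [div_le_iff₀ hz]; exact h2
  have hTn : Tnorm lam (fun n => A n (n + k)) ≤ ENNReal.ofReal (P k) + ENNReal.ofReal (Q k) :=
    add_le_add hs1 hs2
  calc ENNReal.ofReal (Real.exp (γ * absZ k)) * Tnorm lam (fun n => A n (n + k))
      ≤ ENNReal.ofReal (Real.exp (γ * absZ k)) * (ENNReal.ofReal (P k) + ENNReal.ofReal (Q k)) :=
        mul_le_mul_right hTn _
    _ = ENNReal.ofReal (Real.exp (γ * absZ k) * (P k + Q k)) := by
        rw [← ENNReal.ofReal_add (hP k) (hQ k), ← ENNReal.ofReal_mul (Real.exp_pos _).le]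
    _ ≤ ENNReal.ofReal c := by
        refine ENNReal.ofReal_le_ofReal ?_
        have h3 := hPQ k
        have h4 : Real.exp (γ * absZ k) * (P k + Q k) ≤
            Real.exp (γ * absZ k) * (c * Real.exp (-(γ * absZ k))) :=
          mul_le_mul_of_nonneg_left h3 (Real.exp_pos _).le
        have he : Real.exp (γ * absZ k) * Real.exp (-(γ * absZ k)) = 1 := by
          rw [← Real.exp_add]; simp
        have h5 : Real.exp (γ * absZ k) * (c * Real.exp (-(γ * absZ k))) = c := by
          rw [show Real.exp (γ * absZ k) * (c * Real.exp (-(γ * absZ k))) =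
            c * (Real.exp (γ * absZ k) * Real.exp (-(γ * absZ k))) by ring, he, mul_one]
        linarith

lemma Good.mono {d : ℕ} {lam : Zd d → ℝ} {γ γ' c : ℝ} {A : Zd d → Zd d → ℂ}
    (hγ : γ' ≤ γ) (hg : Good lam γ c A) : Good lam γ' c A := by
  obtain ⟨P, Q, hP, hQ, hPQ, hB⟩ := hg
  refine ⟨P, Q, hP, hQ, fun k => le_trans (hPQ k) ?_, hB⟩
  have hc : 0 ≤ c := by
    have := hPQ 0
    have h0 : absZ (0 : Zd d) = 0 := by simp [absZ]
    rw [h0] at this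
    simp at this
    nlinarith [hP 0, hQ 0, this]
  refine mul_le_mul_of_nonneg_left ?_ hc
  apply Real.exp_le_exp.mpr
  nlinarith [absZ_nonneg k]

lemma Good.le {d : ℕ} {lam : Zd d → ℝ} {γ c c' : ℝ} {A : Zd d → Zd d → ℂ}
    (hc : c ≤ c') (hg : Good lam γ c A) : Good lam γ c' A := by
  obtain ⟨P, Q, hP, hQ, hPQ, hB⟩ := hg
  exact ⟨P, Q, hP, hQ, fun k => le_trans (hPQ k)
    (mul_le_mul_of_nonneg_right hc (Real.exp_pos _).le), hB⟩

lemma Good.neg {d : ℕ} {lam : Zd d → ℝ} {γ c : ℝ} {A : Zd d → Zd d → ℂ}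
    (hg : Good lam γ c A) : Good lam γ c (fun n m => -(A n m)) := by
  obtain ⟨P, Q, hP, hQ, hPQ, hB1, hB2⟩ := hg
  refine ⟨P, Q, hP, hQ, hPQ, fun n m => by simpa using hB1 n m, fun n m j hj => ?_⟩
  have := hB2 n m j hj
  have hneg : -(A (n + j) (m + j)) - -(A n m) = -(A (n + j) (m + j) - A n m) := by ring
  rw [hneg, norm_neg]
  exact this

lemma Good.entry {d : ℕ} {lam : Zd d → ℝ} {γ c : ℝ} {A : Zd d → Zd d → ℂ}
    (hg : Good lam γ c A) (n m : Zd d) :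
    ‖A n m‖ ≤ c * Real.exp (-(γ * absZ (m - n))) := by
  obtain ⟨P, Q, hP, hQ, hPQ, hB1, hB2⟩ := hg
  calc ‖A n m‖ ≤ P (m - n) := hB1 n m
    _ ≤ P (m - n) + Q (m - n) := by linarith [hQ (m - n)]
    _ ≤ c * Real.exp (-(γ * absZ (m - n))) := hPQ (m - n)

lemma Good.nonneg_c {d : ℕ} {lam : Zd d → ℝ} {γ c : ℝ} {A : Zd d → Zd d → ℂ}
    (hg : Good lam γ c A) : 0 ≤ c := by
  obtain ⟨P, Q, hP, hQ, hPQ, hB⟩ := hg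
  have := hPQ 0
  have h0 : absZ (0 : Zd d) = 0 := by simp [absZ]
  rw [h0] at this
  simp at this
  nlinarith [hP 0, hQ 0, this]

/-! ### Multiplication -/

section Mul
variable {d : ℕ} {lam : Zd d → ℝ} {α δ c₁ c₂ : ℝ} {A B : Zd d → Zd d → ℂ}

lemma hbase (hδ : 0 < δ) (hγ : 0 ≤ α - δ) (n m : Zd d) :
    Summable (fun l : Zd d =>
      Real.exp (-(α * absZ (l - n))) * Real.exp (-((α - δ) * absZ (m - l)))) := by
  have h1 := summable_shift (summable_conv_pro hδ hγ (m - n)) n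
  refine h1.congr fun l => ?_
  have h2 : m - n - (l - n) = m - l := by abel
  rw [h2]

lemma key_summable (hδ : 0 < δ) (hγ : 0 ≤ α - δ) (hc₁ : 0 ≤ c₁) (F G : Zd d → ℝ)
    (hF : ∀ k, 0 ≤ F k) (hG : ∀ k, 0 ≤ G k)
    (hFb : ∀ k, F k ≤ c₁ * Real.exp (-(α * absZ k)))
    (hGb : ∀ k, G k ≤ c₂ * Real.exp (-((α - δ) * absZ k)))
    (n m : Zd d) : Summable (fun l : Zd d => F (l - n) * G (m - l)) := by
  refine Summable.of_nonneg_of_le (fun l => mul_nonneg (hF _) (hG _))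
    (fun l => mul_le_mul (hFb _) (hGb _) (hG _) (mul_nonneg hc₁ (Real.exp_pos _).le)) ?_
  have h1 := (hbase hδ hγ n m).mul_left (c₁ * c₂)
  refine h1.congr fun l => by ring

lemma key_summable0 (hδ : 0 < δ) (hγ : 0 ≤ α - δ) (hc₁ : 0 ≤ c₁) (F G : Zd d → ℝ)
    (hF : ∀ k, 0 ≤ F k) (hG : ∀ k, 0 ≤ G k)
    (hFb : ∀ k, F k ≤ c₁ * Real.exp (-(α * absZ k)))
    (hGb : ∀ k, G k ≤ c₂ * Real.exp (-((α - δ) * absZ k)))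
    (k : Zd d) : Summable (fun t : Zd d => F t * G (k - t)) := by
  refine Summable.of_nonneg_of_le (fun t => mul_nonneg (hF _) (hG _))
    (fun t => mul_le_mul (hFb _) (hGb _) (hG _) (mul_nonneg hc₁ (Real.exp_pos _).le)) ?_
  have h1 := (summable_conv_pro hδ hγ k).mul_left (c₁ * c₂)
  refine h1.congr fun t => by ring

lemma reindex_conv (F G : Zd d → ℝ) (n m : Zd d) :
    (∑' l : Zd d, F (l - n) * G (m - l)) = ∑' t : Zd d, F t * G ((m - n) - t) := by
  rw [← Equiv.tsum_eq (Equiv.addLeft n) (fun l => F (l - n) * G (m - l))]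
  refine tsum_congr fun t => ?_
  have h1 : (Equiv.addLeft n) t = n + t := rfl
  rw [h1]
  have h2 : n + t - n = t := by abel
  have h3 : m - (n + t) = m - n - t := by abel
  rw [h2, h3]

lemma Good.mul (hδ : 0 < δ) (hγ : 0 ≤ α - δ)
    (hA : Good lam α c₁ A) (hB : Good lam (α - δ) c₂ B) :
    Good lam (α - δ) (Esum d δ * c₁ * c₂) (matMul A B) := by
  have hc₁ : 0 ≤ c₁ := hA.nonneg_c
  have hc₂ : 0 ≤ c₂ := hB.nonneg_c
  obtain ⟨P₁, Q₁, hP₁, hQ₁, hPQ₁, hA1, hA2⟩ := hA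
  obtain ⟨P₂, Q₂, hP₂, hQ₂, hPQ₂, hB1, hB2⟩ := hB
  have hF1 : ∀ k, P₁ k ≤ c₁ * Real.exp (-(α * absZ k)) := fun k => by
    linarith [hPQ₁ k, hQ₁ k]
  have hF1' : ∀ k, Q₁ k ≤ c₁ * Real.exp (-(α * absZ k)) := fun k => by
    linarith [hPQ₁ k, hP₁ k]
  have hF2 : ∀ k, P₂ k ≤ c₂ * Real.exp (-((α - δ) * absZ k)) := fun k => by
    linarith [hPQ₂ k, hQ₂ k]
  have hF2' : ∀ k, Q₂ k ≤ c₂ * Real.exp (-((α - δ) * absZ k)) := fun k => by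
    linarith [hPQ₂ k, hP₂ k]
  -- summabilities of the three convolutions (both in l-form and t-form)
  have sPP := key_summable0 (c₁ := c₁) (c₂ := c₂) hδ hγ hc₁ P₁ P₂ hP₁ hP₂ hF1 hF2
  have sQP := key_summable0 (c₁ := c₁) (c₂ := c₂) hδ hγ hc₁ Q₁ P₂ hQ₁ hP₂ hF1' hF2
  have sPQ := key_summable0 (c₁ := c₁) (c₂ := c₂) hδ hγ hc₁ P₁ Q₂ hP₁ hQ₂ hF1 hF2'
  have sPPl := key_summable (c₁ := c₁) (c₂ := c₂) hδ hγ hc₁ P₁ P₂ hP₁ hP₂ hF1 hF2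
  have sQPl := key_summable (c₁ := c₁) (c₂ := c₂) hδ hγ hc₁ Q₁ P₂ hQ₁ hP₂ hF1' hF2
  have sPQl := key_summable (c₁ := c₁) (c₂ := c₂) hδ hγ hc₁ P₁ Q₂ hP₁ hQ₂ hF1 hF2'
  refine ⟨fun k => ∑' t : Zd d, P₁ t * P₂ (k - t),
    fun k => (∑' t : Zd d, Q₁ t * P₂ (k - t)) + (∑' t : Zd d, P₁ t * Q₂ (k - t)),
    fun k => tsum_nonneg fun t => mul_nonneg (hP₁ _) (hP₂ _),
    fun k => add_nonneg (tsum_nonneg fun t => mul_nonneg (hQ₁ _) (hP₂ _))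
      (tsum_nonneg fun t => mul_nonneg (hP₁ _) (hQ₂ _)), ?_, ?_, ?_⟩
  · -- the combined bound
    intro k
    have e1 : (∑' t : Zd d, P₁ t * P₂ (k - t)) + ((∑' t : Zd d, Q₁ t * P₂ (k - t)) +
        (∑' t : Zd d, P₁ t * Q₂ (k - t))) =
        ∑' t : Zd d, (P₁ t * P₂ (k - t) + (Q₁ t * P₂ (k - t) + P₁ t * Q₂ (k - t))) := by
      rw [Summable.tsum_add (sPP k) ((sQP k).add (sPQ k)), Summable.tsum_add (sQP k) (sPQ k)]
    rw [e1]
    have hbound : ∀ t : Zd d, P₁ t * P₂ (k - t) + (Q₁ t * P₂ (k - t) + P₁ t * Q₂ (k - t)) ≤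
        (c₁ * Real.exp (-(α * absZ t))) * (c₂ * Real.exp (-((α - δ) * absZ (k - t)))) := by
      intro t
      have h := mul_le_mul (hPQ₁ t) (hPQ₂ (k - t))
        (add_nonneg (hP₂ _) (hQ₂ _)) (by positivity)
      nlinarith [mul_nonneg (hQ₁ t) (hQ₂ (k - t))]
    have hsum2 : Summable (fun t : Zd d => (c₁ * Real.exp (-(α * absZ t))) *
        (c₂ * Real.exp (-((α - δ) * absZ (k - t))))) := by
      have h1 := (summable_conv_pro hδ hγ k).mul_left (c₁ * c₂)
      refine h1.congr fun t => by ring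
    have hsum1 : Summable (fun t : Zd d =>
        P₁ t * P₂ (k - t) + (Q₁ t * P₂ (k - t) + P₁ t * Q₂ (k - t))) :=
      (sPP k).add ((sQP k).add (sPQ k))
    have h2 := Summable.tsum_le_tsum hbound hsum1 hsum2
    refine le_trans h2 ?_
    have e2 : (∑' t : Zd d, (c₁ * Real.exp (-(α * absZ t))) *
        (c₂ * Real.exp (-((α - δ) * absZ (k - t))))) =
        (c₁ * c₂) * ∑' t : Zd d,
          Real.exp (-(α * absZ t)) * Real.exp (-((α - δ) * absZ (k - t))) := by
      rw [← tsum_mul_left]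
      exact tsum_congr fun t => by ring
    rw [e2]
    have h3 := tsum_conv_pro_le (d := d) hδ hγ k
    calc (c₁ * c₂) * ∑' t : Zd d,
          Real.exp (-(α * absZ t)) * Real.exp (-((α - δ) * absZ (k - t)))
        ≤ (c₁ * c₂) * (Esum d δ * Real.exp (-((α - δ) * absZ k))) :=
          mul_le_mul_of_nonneg_left h3 (by positivity)
      _ = Esum d δ * c₁ * c₂ * Real.exp (-((α - δ) * absZ k)) := by ring
  · -- entry bound
    intro n m
    have habs : ∀ l : Zd d, ‖A n l * B l m‖ ≤ P₁ (l - n) * P₂ (m - l) := by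
      intro l
      rw [norm_mul]
      exact mul_le_mul (hA1 n l) (hB1 l m) (norm_nonneg _) (hP₁ _)
    have hs : Summable (fun l : Zd d => ‖A n l * B l m‖) :=
      Summable.of_nonneg_of_le (fun l => norm_nonneg _) habs (sPPl n m)
    have hs' : Summable (fun l : Zd d => ‖A n l * B l m‖) := by
      simpa using hs
    calc ‖matMul A B n m‖ = ‖∑' l : Zd d, A n l * B l m‖ := by
          rfl
      _ ≤ ∑' l : Zd d, ‖A n l * B l m‖ := norm_tsum_le_tsum_norm hs'
      _ = ∑' l : Zd d, ‖A n l * B l m‖ := by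
          rfl
      _ ≤ ∑' l : Zd d, P₁ (l - n) * P₂ (m - l) := Summable.tsum_le_tsum habs hs (sPPl n m)
      _ = ∑' t : Zd d, P₁ t * P₂ ((m - n) - t) := reindex_conv P₁ P₂ n m
  · -- difference bound
    intro n m j hj
    -- rewrite the first sum by shifting l ↦ l + j
    have hrw : matMul A B (n + j) (m + j) =
        ∑' l : Zd d, A (n + j) (l + j) * B (l + j) (m + j) := by
      rw [matMul]
      exact (Equiv.tsum_eq (Equiv.addRight j) (fun l => A (n + j) l * B l (m + j))).symm
    have hb1 : ∀ l : Zd d, ‖A (n + j) (l + j) * B (l + j) (m + j)‖ ≤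
        P₁ (l - n) * P₂ (m - l) := by
      intro l
      rw [norm_mul]
      have h1 := hA1 (n + j) (l + j)
      have e1 : l + j - (n + j) = l - n := by abel
      rw [e1] at h1
      have h2 := hB1 (l + j) (m + j)
      have e2 : m + j - (l + j) = m - l := by abel
      rw [e2] at h2
      exact mul_le_mul h1 h2 (norm_nonneg _) (hP₁ _)
    have hsum1 : Summable (fun l : Zd d => A (n + j) (l + j) * B (l + j) (m + j)) := by
      refine Summable.of_norm_bounded (sPPl n m) fun l => ?_
      exact hb1 l
    have hsum2 : Summable (fun l : Zd d => A n l * B l m) := by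
      refine Summable.of_norm_bounded (sPPl n m) fun l => ?_
      rw [norm_mul]
      exact mul_le_mul (hA1 n l) (hB1 l m) (norm_nonneg _) (hP₁ _)
    have hdiff : matMul A B (n + j) (m + j) - matMul A B n m =
        ∑' l : Zd d, (A (n + j) (l + j) * B (l + j) (m + j) - A n l * B l m) := by
      rw [hrw, matMul, ← Summable.tsum_sub hsum1 hsum2]
    have hpt : ∀ l : Zd d,
        ‖A (n + j) (l + j) * B (l + j) (m + j) - A n l * B l m‖ ≤
        (Q₁ (l - n) * P₂ (m - l) + P₁ (l - n) * Q₂ (m - l)) * |lam j - lam 0| := by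
      intro l
      have hsplit : A (n + j) (l + j) * B (l + j) (m + j) - A n l * B l m =
          (A (n + j) (l + j) - A n l) * B (l + j) (m + j) +
          A n l * (B (l + j) (m + j) - B l m) := by ring
      rw [hsplit]
      refine le_trans (norm_add_le _ _) ?_
      rw [norm_mul, norm_mul]
      have h1 := hA2 n l j hj
      have h2 := hB1 (l + j) (m + j)
      have e2 : m + j - (l + j) = m - l := by abel
      rw [e2] at h2
      have h3 := hA1 n l
      have h4 := hB2 l m j hj
      have hQ1 : 0 ≤ Q₁ (l - n) * |lam j - lam 0| := mul_nonneg (hQ₁ _) (abs_nonneg _)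
      have := mul_le_mul h1 h2 (norm_nonneg _) hQ1
      have h5 := mul_le_mul h3 h4 (norm_nonneg _) (hP₁ _)
      nlinarith [this, h5]
    have hbnd_sum : Summable (fun l : Zd d =>
        (Q₁ (l - n) * P₂ (m - l) + P₁ (l - n) * Q₂ (m - l)) * |lam j - lam 0|) :=
      ((sQPl n m).add (sPQl n m)).mul_right _
    have habs_sum : Summable (fun l : Zd d =>
        ‖A (n + j) (l + j) * B (l + j) (m + j) - A n l * B l m‖) :=
      Summable.of_nonneg_of_le (fun l => norm_nonneg _) hpt hbnd_sum
    have habs_sum' : Summable (fun l : Zd d =>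
        ‖A (n + j) (l + j) * B (l + j) (m + j) - A n l * B l m‖) := by
      simpa using habs_sum
    calc ‖matMul A B (n + j) (m + j) - matMul A B n m‖
        = ‖∑' l : Zd d, (A (n + j) (l + j) * B (l + j) (m + j) - A n l * B l m)‖ := by
          rw [hdiff]
      _ ≤ ∑' l : Zd d, ‖A (n + j) (l + j) * B (l + j) (m + j) - A n l * B l m‖ :=
          norm_tsum_le_tsum_norm habs_sum'
      _ = ∑' l : Zd d, ‖A (n + j) (l + j) * B (l + j) (m + j) - A n l * B l m‖ := by
          rfl
      _ ≤ ∑' l : Zd d, (Q₁ (l - n) * P₂ (m - l) + P₁ (l - n) * Q₂ (m - l)) * |lam j - lam 0| :=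
          Summable.tsum_le_tsum hpt habs_sum hbnd_sum
      _ = (∑' l : Zd d, (Q₁ (l - n) * P₂ (m - l) + P₁ (l - n) * Q₂ (m - l))) * |lam j - lam 0| :=
          tsum_mul_right
      _ = ((∑' t : Zd d, Q₁ t * P₂ ((m - n) - t)) + ∑' t : Zd d, P₁ t * Q₂ ((m - n) - t)) *
            |lam j - lam 0| := by
          rw [Summable.tsum_add (sQPl n m) (sPQl n m), reindex_conv Q₁ P₂ n m, reindex_conv P₁ Q₂ n m]

lemma good_mul_abs_summable (hδ : 0 < δ) (hγ : 0 ≤ α - δ)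
    (hA : Good lam α c₁ A) (hB : Good lam (α - δ) c₂ B) (n m : Zd d) :
    Summable (fun l : Zd d => ‖A n l * B l m‖) := by
  have hc₁ : 0 ≤ c₁ := hA.nonneg_c
  have hc₂ : 0 ≤ c₂ := hB.nonneg_c
  refine Summable.of_nonneg_of_le (fun l => norm_nonneg _) (fun l => ?_)
    ((hbase hδ hγ n m).mul_left (c₁ * c₂))
  rw [norm_mul]
  calc ‖A n l‖ * ‖B l m‖
      ≤ (c₁ * Real.exp (-(α * absZ (l - n)))) * (c₂ * Real.exp (-((α - δ) * absZ (m - l)))) :=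
        mul_le_mul (hA.entry n l) (hB.entry l m) (norm_nonneg _)
          (mul_nonneg hc₁ (Real.exp_pos _).le)
    _ = c₁ * c₂ * (Real.exp (-(α * absZ (l - n))) * Real.exp (-((α - δ) * absZ (m - l)))) := by
        ring

end Mul

/-! ### Infinite sums of good matrices -/

lemma good_tsum {d : ℕ} {lam : Zd d → ℝ} {γ : ℝ} {W : ℕ → Zd d → Zd d → ℂ} {u : ℕ → ℝ}
    (hu : Summable u) (h : ∀ i, Good lam γ (u i) (W i)) :
    (∀ n m : Zd d, Summable fun i : ℕ => ‖W i n m‖) ∧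
    Good lam γ (∑' i, u i) (fun n m => ∑' i, W i n m) := by
  choose P Q hP hQ hPQ hB using h
  have hPu : ∀ i k, P i k ≤ u i * Real.exp (-(γ * absZ k)) := fun i k => by
    linarith [hPQ i k, hQ i k]
  have hQu : ∀ i k, Q i k ≤ u i * Real.exp (-(γ * absZ k)) := fun i k => by
    linarith [hPQ i k, hP i k]
  have hsumP : ∀ k, Summable fun i => P i k := fun k =>
    Summable.of_nonneg_of_le (fun i => hP i k) (fun i => hPu i k) (hu.mul_right _)
  have hsumQ : ∀ k, Summable fun i => Q i k := fun k =>
    Summable.of_nonneg_of_le (fun i => hQ i k) (fun i => hQu i k) (hu.mul_right _)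
  have hentry : ∀ n m : Zd d, Summable fun i => ‖W i n m‖ := fun n m =>
    Summable.of_nonneg_of_le (fun i => norm_nonneg _) (fun i => (hB i).1 n m)
      (hsumP (m - n))
  have hentry' : ∀ n m : Zd d, Summable fun i => W i n m := fun n m => by
    refine Summable.of_norm_bounded (hsumP (m - n)) fun i => ?_
    exact (hB i).1 n m
  refine ⟨hentry, fun k => ∑' i, P i k, fun k => ∑' i, Q i k,
    fun k => tsum_nonneg fun i => hP i k, fun k => tsum_nonneg fun i => hQ i k, ?_, ?_, ?_⟩
  · intro k
    rw [← Summable.tsum_add (hsumP k) (hsumQ k)]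
    have h2 := Summable.tsum_le_tsum (fun i => hPQ i k) ((hsumP k).add (hsumQ k)) (hu.mul_right _)
    rw [tsum_mul_right] at h2
    exact h2
  · intro n m
    calc ‖∑' i, W i n m‖ = ‖∑' i, W i n m‖ := rfl
      _ ≤ ∑' i, ‖W i n m‖ := norm_tsum_le_tsum_norm (by
          simpa using hentry n m)
      _ = ∑' i, ‖W i n m‖ := by rfl
      _ ≤ ∑' i, P i (m - n) := Summable.tsum_le_tsum (fun i => (hB i).1 n m) (hentry n m) (hsumP (m - n))
  · intro n m j hj
    have hd : (∑' i, W i (n + j) (m + j)) - ∑' i, W i n m =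
        ∑' i, (W i (n + j) (m + j) - W i n m) := by
      rw [Summable.tsum_sub (by
        have := hentry' (n + j) (m + j)
        exact this) (hentry' n m)]
    rw [hd]
    have hpt : ∀ i, ‖W i (n + j) (m + j) - W i n m‖ ≤
        Q i (m - n) * |lam j - lam 0| := fun i => (hB i).2 n m j hj
    have hsb : Summable fun i => Q i (m - n) * |lam j - lam 0| := (hsumQ (m - n)).mul_right _
    have hsa : Summable fun i => ‖W i (n + j) (m + j) - W i n m‖ :=
      Summable.of_nonneg_of_le (fun i => norm_nonneg _) hpt hsb
    calc ‖∑' i, (W i (n + j) (m + j) - W i n m)‖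
        = ‖∑' i, (W i (n + j) (m + j) - W i n m)‖ := rfl
      _ ≤ ∑' i, ‖W i (n + j) (m + j) - W i n m‖ := norm_tsum_le_tsum_norm (by
          simpa using hsa)
      _ = ∑' i, ‖W i (n + j) (m + j) - W i n m‖ := by
          rfl
      _ ≤ ∑' i, Q i (m - n) * |lam j - lam 0| := Summable.tsum_le_tsum hpt hsa hsb
      _ = (∑' i, Q i (m - n)) * |lam j - lam 0| := tsum_mul_right

/-! ### Associativity of matMul under exponential entry bounds -/

lemma expZ_le_one {γ x : ℝ} (hγ : 0 ≤ γ) (hx : 0 ≤ x) : Real.exp (-(γ * x)) ≤ 1 := by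
  rw [Real.exp_le_one_iff]
  nlinarith

lemma matMul_assoc {d : ℕ} {γ : ℝ} (hγ : 0 < γ) {M₁ M₂ M₃ : Zd d → Zd d → ℂ}
    {c₁ c₂ c₃ : ℝ} (hc₁ : 0 ≤ c₁) (hc₂ : 0 ≤ c₂) (hc₃ : 0 ≤ c₃)
    (h₁ : ∀ n m, ‖M₁ n m‖ ≤ c₁ * Real.exp (-(γ * absZ (m - n))))
    (h₂ : ∀ n m, ‖M₂ n m‖ ≤ c₂ * Real.exp (-(γ * absZ (m - n))))
    (h₃ : ∀ n m, ‖M₃ n m‖ ≤ c₃ * Real.exp (-(γ * absZ (m - n)))) :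
    matMul (matMul M₁ M₂) M₃ = matMul M₁ (matMul M₂ M₃) := by
  funext n m
  have hshift : ∀ x : Zd d, Summable (fun l : Zd d => Real.exp (-(γ * absZ (l - x)))) :=
    fun x => summable_shift (summable_expZ hγ) x
  set f : Zd d → Zd d → ℂ := fun l₁ l₂ => M₁ n l₁ * M₂ l₁ l₂ * M₃ l₂ m with hf
  have hb : ∀ l₁ l₂, ‖f l₁ l₂‖ ≤
      (c₁ * Real.exp (-(γ * absZ (l₁ - n)))) * (c₂ * c₃ * Real.exp (-(γ * absZ (l₂ - l₁)))) := by
    intro l₁ l₂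
    rw [hf, norm_mul, norm_mul]
    have e3 : ‖M₃ l₂ m‖ ≤ c₃ := by
      refine le_trans (h₃ l₂ m) ?_
      calc c₃ * Real.exp (-(γ * absZ (m - l₂))) ≤ c₃ * 1 :=
            mul_le_mul_of_nonneg_left (expZ_le_one hγ.le (absZ_nonneg _)) hc₃
        _ = c₃ := mul_one _
    calc ‖M₁ n l₁‖ * ‖M₂ l₁ l₂‖ * ‖M₃ l₂ m‖
        ≤ (c₁ * Real.exp (-(γ * absZ (l₁ - n)))) * (c₂ * Real.exp (-(γ * absZ (l₂ - l₁)))) * c₃ := by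
          refine mul_le_mul (mul_le_mul (h₁ n l₁) (h₂ l₁ l₂) (norm_nonneg _)
            (mul_nonneg hc₁ (Real.exp_pos _).le)) e3 (norm_nonneg _) ?_
          positivity
      _ = (c₁ * Real.exp (-(γ * absZ (l₁ - n)))) * (c₂ * c₃ * Real.exp (-(γ * absZ (l₂ - l₁)))) := by
          ring
  have hgsum : Summable (fun p : Zd d × Zd d =>
      (c₁ * Real.exp (-(γ * absZ (p.1 - n)))) * (c₂ * c₃ * Real.exp (-(γ * absZ (p.2 - p.1))))) := by
    set e : Zd d × Zd d ≃ Zd d × Zd d :=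
      Equiv.prodShear (Equiv.refl (Zd d)) (fun x => Equiv.addLeft x) with he
    rw [← e.summable_iff]
    have hcomp : ∀ p : Zd d × Zd d,
        ((fun p : Zd d × Zd d => (c₁ * Real.exp (-(γ * absZ (p.1 - n)))) *
          (c₂ * c₃ * Real.exp (-(γ * absZ (p.2 - p.1))))) ∘ e) p =
        (c₁ * Real.exp (-(γ * absZ (p.1 - n)))) * (c₂ * c₃ * Real.exp (-(γ * absZ p.2))) := by
      intro ⟨x, t⟩
      have h1 : e (x, t) = (x, x + t) := rfl
      simp only [Function.comp_apply, h1]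
      have h2 : x + t - x = t := by abel
      rw [h2]
    refine Summable.congr ?_ fun p => (hcomp p).symm
    exact Summable.mul_of_nonneg ((hshift n).mul_left c₁) ((summable_expZ hγ).mul_left (c₂ * c₃))
      (fun x => by positivity) (fun x => by positivity)
  have hFsum : Summable (Function.uncurry f) := by
    refine Summable.of_norm_bounded hgsum fun p => hb p.1 p.2
  have hrow : ∀ l₁, Summable (f l₁) := by
    intro l₁
    refine Summable.of_norm_bounded (g := fun l₂ => (c₁ * Real.exp (-(γ * absZ (l₁ - n)))) *
      (c₂ * c₃ * Real.exp (-(γ * absZ (l₂ - l₁)))))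
      (((hshift l₁).mul_left (c₂ * c₃)).mul_left _) fun l₂ => hb l₁ l₂
  have hcol : ∀ l₂, Summable (fun l₁ => f l₁ l₂) := by
    intro l₂
    refine Summable.of_norm_bounded (g := fun l₁ =>
      (c₁ * Real.exp (-(γ * absZ (l₁ - n)))) * (c₂ * c₃))
      (((hshift n).mul_left c₁).mul_right (c₂ * c₃)) fun l₁ => ?_
    refine le_trans (hb l₁ l₂) ?_
    calc (c₁ * Real.exp (-(γ * absZ (l₁ - n)))) * (c₂ * c₃ * Real.exp (-(γ * absZ (l₂ - l₁))))
        ≤ (c₁ * Real.exp (-(γ * absZ (l₁ - n)))) * (c₂ * c₃ * 1) := by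
          refine mul_le_mul_of_nonneg_left ?_ (by positivity)
          exact mul_le_mul_of_nonneg_left (expZ_le_one hγ.le (absZ_nonneg _))
            (mul_nonneg hc₂ hc₃)
      _ = (c₁ * Real.exp (-(γ * absZ (l₁ - n)))) * (c₂ * c₃) := by ring
  have hLHS : matMul (matMul M₁ M₂) M₃ n m = ∑' l₂, ∑' l₁, f l₁ l₂ := by
    rw [matMul]
    refine tsum_congr fun l₂ => ?_
    rw [matMul, ← tsum_mul_right]
  have hRHS : matMul M₁ (matMul M₂ M₃) n m = ∑' l₁, ∑' l₂, f l₁ l₂ := by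
    rw [matMul]
    refine tsum_congr fun l₁ => ?_
    rw [matMul, ← tsum_mul_left]
    exact tsum_congr fun l₂ => by rw [hf]; ring
  rw [hLHS, hRHS]
  exact Summable.tsum_comm' hFsum hrow hcol

lemma telescope {f : ℕ → ℂ} (hf : Summable f) : ∑' i, (f i - f (i + 1)) = f 0 := by
  have h1 : Summable fun i => f (i + 1) := (summable_nat_add_iff 1).mpr hf
  rw [Summable.tsum_sub hf h1, Summable.tsum_eq_zero_add hf]
  ring

end NA


set_option maxHeartbeats 4000000 in
open NA in
theorem neumann_series_inverse_estimate
    (d : ℕ) (hd : 1 ≤ d)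
    (lam : Zd d → ℝ) (hl0 : ∀ j : Zd d, j ≠ 0 → lam j ≠ lam 0)
    (α δ : ℝ) (hα : 0 < α) (hδ : 0 < δ) (hδα : δ < α) (hδ1 : δ ≤ 1)
    (X : Zd d → Zd d → ℂ)
    (hX : matNorm lam α (fun n m => X n m - idMat d n m) <
      ENNReal.ofReal ((δ / 3) ^ d)) :
    ∃ Y : Zd d → Zd d → ℂ,
      (∀ n m : Zd d, Summable fun l : Zd d => ‖X n l * Y l m‖) ∧
      (∀ n m : Zd d, Summable fun l : Zd d => ‖Y n l * X l m‖) ∧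
      (∀ n m : Zd d, ∑' l : Zd d, X n l * Y l m = idMat d n m) ∧
      (∀ n m : Zd d, ∑' l : Zd d, Y n l * X l m = idMat d n m) ∧
      matNorm lam (α - δ) (fun n m => Y n m - idMat d n m) ≠ ⊤ ∧
      (matNorm lam (α - δ) (fun n m => Y n m - idMat d n m)).toReal ≤
        (matNorm lam α (fun n m => X n m - idMat d n m)).toReal /
          (1 - (3 / δ) ^ d *
            (matNorm lam α (fun n m => X n m - idMat d n m)).toReal) := by
  classical
  set A : Zd d → Zd d → ℂ := fun n m => X n m - idMat d n m with hA
  have hfin : matNorm lam α A ≠ ⊤ := ne_top_of_lt hX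
  set ε : ℝ := (matNorm lam α A).toReal with hε
  have hε0 : 0 ≤ ε := ENNReal.toReal_nonneg
  have hεlt : ε < (δ / 3) ^ d := (ENNReal.lt_ofReal_iff_toReal_lt hfin).mp hX
  have hγ : (0:ℝ) ≤ α - δ := by linarith
  have hγpos : (0:ℝ) < α - δ := by linarith
  have hGA : Good lam α ε A :=
    good_of_matNorm hε0 hl0 (le_of_eq (ENNReal.ofReal_toReal hfin).symm)
  set B : Zd d → Zd d → ℂ := fun n m => -(A n m) with hB
  have hGB : Good lam α ε B := hGA.neg
  have hE0 : 0 ≤ Esum d δ := Esum_nonneg d δ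
  have hEK : Esum d δ ≤ (3 / δ) ^ d := Esum_le hδ hδ1
  have hK0 : (0:ℝ) < (3 / δ) ^ d := by positivity
  have hKε : (3 / δ) ^ d * ε < 1 := by
    have h1 : (3 / δ) ^ d * ε < (3 / δ) ^ d * (δ / 3) ^ d := by
      exact mul_lt_mul_of_pos_left hεlt hK0
    have h2 : (3 / δ) ^ d * (δ / 3) ^ d = 1 := by
      rw [← mul_pow]
      have : (3 / δ) * (δ / 3) = 1 := by field_simp
      rw [this, one_pow]
    linarith
  have hr0 : 0 ≤ Esum d δ * ε := mul_nonneg hE0 hε0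
  have hrK : Esum d δ * ε ≤ (3 / δ) ^ d * ε := mul_le_mul_of_nonneg_right hEK hε0
  have hr1 : Esum d δ * ε < 1 := lt_of_le_of_lt hrK hKε
  -- powers of B
  have hGW : ∀ i : ℕ, Good lam (α - δ) (ε * (Esum d δ * ε) ^ i) ((matMul B)^[i] B) := by
    intro i
    induction i with
    | zero => simpa using hGB.mono (by linarith : α - δ ≤ α)
    | succ i ih =>
        rw [Function.iterate_succ_apply']
        exact Good.le (le_of_eq (by ring)) (Good.mul hδ hγ hGB ih)
  have hu : Summable (fun i : ℕ => ε * (Esum d δ * ε) ^ i) :=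
    (summable_geometric_of_lt_one hr0 hr1).mul_left ε
  have hu0 : ∀ i, 0 ≤ ε * (Esum d δ * ε) ^ i := fun i => mul_nonneg hε0 (pow_nonneg hr0 i)
  have htsum_u : (∑' i : ℕ, ε * (Esum d δ * ε) ^ i) = ε * (1 - Esum d δ * ε)⁻¹ := by
    rw [tsum_mul_left, tsum_geometric_of_lt_one hr0 hr1]
  obtain ⟨hWabs, hGS0⟩ := good_tsum hu hGW
  set cY : ℝ := ε * (1 - Esum d δ * ε)⁻¹ with hcY
  have hGS : Good lam (α - δ) cY (fun n m => ∑' i, (matMul B)^[i] B n m) := by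
    rw [← htsum_u]
    exact hGS0
  have hcY0 : 0 ≤ cY := hGS.nonneg_c
  -- entry bounds
  have hexp_mono : ∀ k : Zd d, Real.exp (-(α * absZ k)) ≤ Real.exp (-((α - δ) * absZ k)) :=
    fun k => Real.exp_le_exp.mpr (by nlinarith [absZ_nonneg k])
  have hIabs : ∀ n m : Zd d, ‖idMat d n m‖ ≤
      Real.exp (-((α - δ) * absZ (m - n))) := by
    intro n m
    by_cases h : n = m
    · subst h
      have h0 : n - n = (0 : Zd d) := sub_self n
      rw [h0]
      have h1 : absZ (0 : Zd d) = 0 := by simp [absZ]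
      rw [h1]
      simp [idMat]
    · simp only [idMat, if_neg h]
      rw [norm_zero]
      positivity
  have hBabs : ∀ n m : Zd d, ‖B n m‖ ≤
      ε * Real.exp (-((α - δ) * absZ (m - n))) := by
    intro n m
    exact le_trans (hGB.entry n m) (mul_le_mul_of_nonneg_left (hexp_mono _) hε0)
  have hWe : ∀ (i : ℕ) (n m : Zd d), ‖(matMul B)^[i] B n m‖ ≤
      (ε * (Esum d δ * ε) ^ i) * Real.exp (-((α - δ) * absZ (m - n))) :=
    fun i n m => (hGW i).entry n m
  have hXabs : ∀ n m : Zd d, ‖X n m‖ ≤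
      (1 + ε) * Real.exp (-((α - δ) * absZ (m - n))) := by
    intro n m
    have h1 : X n m = idMat d n m + A n m := by rw [hA]; ring
    rw [h1]
    refine le_trans (norm_add_le _ _) ?_
    have h2 : ‖A n m‖ ≤ ε * Real.exp (-((α - δ) * absZ (m - n))) :=
      le_trans (hGA.entry n m) (mul_le_mul_of_nonneg_left (hexp_mono _) hε0)
    have h3 := hIabs n m
    nlinarith [Real.exp_pos (-((α - δ) * absZ (m - n)))]
  have hSabs : ∀ n m : Zd d, ‖∑' i, (matMul B)^[i] B n m‖ ≤
      cY * Real.exp (-((α - δ) * absZ (m - n))) := fun n m => hGS.entry n m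
  have hYabs : ∀ n m : Zd d, ‖idMat d n m + ∑' i, (matMul B)^[i] B n m‖ ≤
      (1 + cY) * Real.exp (-((α - δ) * absZ (m - n))) := by
    intro n m
    refine le_trans (norm_add_le _ _) ?_
    have h3 := hIabs n m
    have h2 := hSabs n m
    nlinarith [Real.exp_pos (-((α - δ) * absZ (m - n)))]
  -- generic summability of entrywise products
  have hgen : ∀ (c₁ c₂ : ℝ), 0 ≤ c₁ → 0 ≤ c₂ → ∀ (M N : Zd d → Zd d → ℂ),
      (∀ a b : Zd d, ‖M a b‖ ≤ c₁ * Real.exp (-((α - δ) * absZ (b - a)))) →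
      (∀ a b : Zd d, ‖N a b‖ ≤ c₂ * Real.exp (-((α - δ) * absZ (b - a)))) →
      ∀ n m : Zd d, Summable fun l : Zd d => ‖M n l * N l m‖ := by
    intro c₁ c₂ hc₁ hc₂ M N hM hN n m
    refine Summable.of_nonneg_of_le (fun l => norm_nonneg _) (fun l => ?_)
      ((summable_shift (summable_expZ hγpos) n).mul_left (c₁ * c₂))
    rw [norm_mul]
    calc ‖M n l‖ * ‖N l m‖
        ≤ (c₁ * Real.exp (-((α - δ) * absZ (l - n)))) *
          (c₂ * Real.exp (-((α - δ) * absZ (m - l)))) :=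
          mul_le_mul (hM n l) (hN l m) (norm_nonneg _)
            (mul_nonneg hc₁ (Real.exp_pos _).le)
      _ ≤ (c₁ * Real.exp (-((α - δ) * absZ (l - n)))) * (c₂ * 1) := by
          refine mul_le_mul_of_nonneg_left ?_ (mul_nonneg hc₁ (Real.exp_pos _).le)
          exact mul_le_mul_of_nonneg_left (expZ_le_one hγ (absZ_nonneg _)) hc₂
      _ = c₁ * c₂ * Real.exp (-((α - δ) * absZ (l - n))) := by ring
  -- summability of (fun i => W i n m)
  have hWc : ∀ n m : Zd d, Summable fun i : ℕ => (matMul B)^[i] B n m := by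
    intro n m
    refine Summable.of_norm_bounded (hu.mul_right (Real.exp (-((α - δ) * absZ (m - n)))))
      fun i => ?_
    exact hWe i n m
  have hWc1 : ∀ n m : Zd d, Summable fun i : ℕ => (matMul B)^[i+1] B n m := fun n m =>
    (summable_nat_add_iff 1).mpr (hWc n m)
  refine ⟨fun n m => idMat d n m + ∑' i, (matMul B)^[i] B n m, ?_, ?_, ?_, ?_, ?_, ?_⟩
  · intro n m
    exact hgen (1 + ε) (1 + cY) (by linarith) (by linarith) X _ hXabs hYabs n m
  · intro n m
    exact hgen (1 + cY) (1 + ε) (by linarith) (by linarith) _ X hYabs hXabs n m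
  · -- X * Y = I
    intro n m
    have hsum1 : Summable fun l : Zd d => X n l * idMat d l m := by
      refine summable_of_ne_finset_zero (s := {m}) fun b hb => ?_
      have hbm : b ≠ m := by simpa using hb
      simp [idMat, hbm]
    have hsum2 : Summable fun l : Zd d => X n l * ∑' i, (matMul B)^[i] B l m := by
      refine Summable.of_norm ?_
      simpa using
        hgen (1 + ε) cY (by linarith) hcY0 X _ hXabs hSabs n m
    have hsplit : (∑' l : Zd d, X n l * (idMat d l m + ∑' i, (matMul B)^[i] B l m)) =
        (∑' l : Zd d, X n l * idMat d l m) +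
          ∑' l : Zd d, X n l * ∑' i, (matMul B)^[i] B l m := by
      rw [← Summable.tsum_add hsum1 hsum2]
      exact tsum_congr fun l => by ring
    have hfirst : (∑' l : Zd d, X n l * idMat d l m) = X n m := by
      rw [tsum_eq_single m (fun b hb => by simp [idMat, hb])]
      simp [idMat]
    have hpair : Summable (Function.uncurry (fun (l : Zd d) (i : ℕ) =>
        X n l * (matMul B)^[i] B l m)) := by
      refine Summable.of_norm_bounded (g := fun p : Zd d × ℕ =>
        ((1 + ε) * Real.exp (-((α - δ) * absZ (p.1 - n)))) * (ε * (Esum d δ * ε) ^ p.2))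
        (Summable.mul_of_nonneg ((summable_shift (summable_expZ hγpos) n).mul_left (1 + ε)) hu
          (fun l => mul_nonneg (by linarith) (Real.exp_pos _).le) hu0) ?_
      rintro ⟨l, i⟩
      rw [Function.uncurry_apply_pair, norm_mul]
      calc ‖X n l‖ * ‖(matMul B)^[i] B l m‖
          ≤ ((1 + ε) * Real.exp (-((α - δ) * absZ (l - n)))) *
            ((ε * (Esum d δ * ε) ^ i) * Real.exp (-((α - δ) * absZ (m - l)))) :=
            mul_le_mul (hXabs n l) (hWe i l m) (norm_nonneg _)
              (mul_nonneg (by linarith) (Real.exp_pos _).le)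
        _ ≤ ((1 + ε) * Real.exp (-((α - δ) * absZ (l - n)))) *
            ((ε * (Esum d δ * ε) ^ i) * 1) := by
            refine mul_le_mul_of_nonneg_left ?_
              (mul_nonneg (by linarith) (Real.exp_pos _).le)
            exact mul_le_mul_of_nonneg_left (expZ_le_one hγ (absZ_nonneg _)) (hu0 i)
        _ = ((1 + ε) * Real.exp (-((α - δ) * absZ (l - n)))) * (ε * (Esum d δ * ε) ^ i) := by
            ring
    have hrowX : ∀ l : Zd d, Summable fun i : ℕ => X n l * (matMul B)^[i] B l m :=
      fun l => (hWc l m).mul_left _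
    have hcolX : ∀ i : ℕ, Summable fun l : Zd d => X n l * (matMul B)^[i] B l m := by
      intro i
      refine Summable.of_norm ?_
      simpa using
        hgen (1 + ε) (ε * (Esum d δ * ε) ^ i) (by linarith) (hu0 i) X _ hXabs
          (fun a b => hWe i a b) n m
    have hswap : (∑' l : Zd d, ∑' i : ℕ, X n l * (matMul B)^[i] B l m) =
        ∑' i : ℕ, ∑' l : Zd d, X n l * (matMul B)^[i] B l m :=
      (Summable.tsum_comm' hpair hrowX hcolX).symm
    have hinner : ∀ i : ℕ, (∑' l : Zd d, X n l * (matMul B)^[i] B l m) =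
        (matMul B)^[i] B n m - (matMul B)^[i + 1] B n m := by
      intro i
      have hXl : ∀ l : Zd d, X n l = idMat d n l - B n l := by
        intro l
        simp only [hB, hA]
        ring
      have hid : Summable fun l : Zd d => idMat d n l * (matMul B)^[i] B l m := by
        refine summable_of_ne_finset_zero (s := {n}) fun b hb => ?_
        have hbn : b ≠ n := by simpa using hb
        simp [idMat, Ne.symm hbn]
      have hBW : Summable fun l : Zd d => B n l * (matMul B)^[i] B l m := by
        refine Summable.of_norm ?_
        simpa using
          hgen ε (ε * (Esum d δ * ε) ^ i) hε0 (hu0 i) B _ hBabs (fun a b => hWe i a b) n m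
      calc (∑' l : Zd d, X n l * (matMul B)^[i] B l m)
          = ∑' l : Zd d, (idMat d n l * (matMul B)^[i] B l m -
              B n l * (matMul B)^[i] B l m) := tsum_congr fun l => by rw [hXl l]; ring
        _ = (∑' l : Zd d, idMat d n l * (matMul B)^[i] B l m) -
              ∑' l : Zd d, B n l * (matMul B)^[i] B l m := Summable.tsum_sub hid hBW
        _ = (matMul B)^[i] B n m - (matMul B)^[i + 1] B n m := by
            congr 1
            · rw [tsum_eq_single n (fun b hb => by simp [idMat, Ne.symm hb])]
              simp [idMat]
            · rw [Function.iterate_succ_apply']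
              rfl
    have htel : (∑' i : ℕ, ((matMul B)^[i] B n m - (matMul B)^[i + 1] B n m)) = B n m :=
      telescope (hWc n m)
    calc (∑' l : Zd d, X n l * (idMat d l m + ∑' i, (matMul B)^[i] B l m))
        = (∑' l : Zd d, X n l * idMat d l m) +
            ∑' l : Zd d, X n l * ∑' i, (matMul B)^[i] B l m := hsplit
      _ = X n m + ∑' l : Zd d, ∑' i : ℕ, X n l * (matMul B)^[i] B l m := by
          rw [hfirst]
          congr 1
          exact tsum_congr fun l => tsum_mul_left.symm
      _ = X n m + ∑' i : ℕ, ∑' l : Zd d, X n l * (matMul B)^[i] B l m := by rw [hswap]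
      _ = X n m + ∑' i : ℕ, ((matMul B)^[i] B n m - (matMul B)^[i + 1] B n m) := by
          rw [tsum_congr hinner]
      _ = X n m + B n m := by rw [htel]
      _ = idMat d n m := by simp only [hB, hA]; ring
  · -- Y * X = I
    intro n m
    have hcomm : ∀ i : ℕ, matMul ((matMul B)^[i] B) B = matMul B ((matMul B)^[i] B) := by
      intro i
      induction i with
      | zero => rfl
      | succ i ih =>
          rw [Function.iterate_succ_apply']
          rw [matMul_assoc hγpos hε0 (hu0 i) hε0 hBabs (fun a b => hWe i a b) hBabs]
          rw [ih]
    have hsum1 : Summable fun l : Zd d => idMat d n l * X l m := by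
      refine summable_of_ne_finset_zero (s := {n}) fun b hb => ?_
      have hbn : b ≠ n := by simpa using hb
      simp [idMat, Ne.symm hbn]
    have hsum2 : Summable fun l : Zd d => (∑' i, (matMul B)^[i] B n l) * X l m := by
      refine Summable.of_norm ?_
      simpa using
        hgen cY (1 + ε) hcY0 (by linarith) _ X hSabs hXabs n m
    have hsplit : (∑' l : Zd d, (idMat d n l + ∑' i, (matMul B)^[i] B n l) * X l m) =
        (∑' l : Zd d, idMat d n l * X l m) +
          ∑' l : Zd d, (∑' i, (matMul B)^[i] B n l) * X l m := by
      rw [← Summable.tsum_add hsum1 hsum2]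
      exact tsum_congr fun l => by ring
    have hfirst : (∑' l : Zd d, idMat d n l * X l m) = X n m := by
      rw [tsum_eq_single n (fun b hb => by simp [idMat, Ne.symm hb])]
      simp [idMat]
    have hpair : Summable (Function.uncurry (fun (i : ℕ) (l : Zd d) =>
        (matMul B)^[i] B n l * X l m)) := by
      refine Summable.of_norm_bounded (g := fun p : ℕ × Zd d =>
        (ε * (Esum d δ * ε) ^ p.1) * ((1 + ε) * Real.exp (-((α - δ) * absZ (p.2 - n)))))
        (Summable.mul_of_nonneg hu ((summable_shift (summable_expZ hγpos) n).mul_left (1 + ε))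
          hu0 (fun l => mul_nonneg (by linarith) (Real.exp_pos _).le)) ?_
      rintro ⟨i, l⟩
      rw [Function.uncurry_apply_pair, norm_mul]
      calc ‖(matMul B)^[i] B n l‖ * ‖X l m‖
          ≤ ((ε * (Esum d δ * ε) ^ i) * Real.exp (-((α - δ) * absZ (l - n)))) *
            ((1 + ε) * Real.exp (-((α - δ) * absZ (m - l)))) :=
            mul_le_mul (hWe i n l) (hXabs l m) (norm_nonneg _)
              (mul_nonneg (hu0 i) (Real.exp_pos _).le)
        _ ≤ ((ε * (Esum d δ * ε) ^ i) * Real.exp (-((α - δ) * absZ (l - n)))) *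
            ((1 + ε) * 1) := by
            refine mul_le_mul_of_nonneg_left ?_
              (mul_nonneg (hu0 i) (Real.exp_pos _).le)
            exact mul_le_mul_of_nonneg_left (expZ_le_one hγ (absZ_nonneg _)) (by linarith)
        _ = (ε * (Esum d δ * ε) ^ i) * ((1 + ε) * Real.exp (-((α - δ) * absZ (l - n)))) := by
            ring
    have hrowY : ∀ i : ℕ, Summable fun l : Zd d => (matMul B)^[i] B n l * X l m := by
      intro i
      refine Summable.of_norm ?_
      simpa using
        hgen (ε * (Esum d δ * ε) ^ i) (1 + ε) (hu0 i) (by linarith) _ X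
          (fun a b => hWe i a b) hXabs n m
    have hcolY : ∀ l : Zd d, Summable fun i : ℕ => (matMul B)^[i] B n l * X l m :=
      fun l => (hWc n l).mul_right _
    have hswap : (∑' l : Zd d, ∑' i : ℕ, (matMul B)^[i] B n l * X l m) =
        ∑' i : ℕ, ∑' l : Zd d, (matMul B)^[i] B n l * X l m :=
      Summable.tsum_comm' hpair hrowY hcolY
    have hinner : ∀ i : ℕ, (∑' l : Zd d, (matMul B)^[i] B n l * X l m) =
        (matMul B)^[i] B n m - (matMul B)^[i + 1] B n m := by
      intro i
      have hXl : ∀ l : Zd d, X l m = idMat d l m - B l m := by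
        intro l
        simp only [hB, hA]
        ring
      have hid : Summable fun l : Zd d => (matMul B)^[i] B n l * idMat d l m := by
        refine summable_of_ne_finset_zero (s := {m}) fun b hb => ?_
        have hbm : b ≠ m := by simpa using hb
        simp [idMat, hbm]
      have hWB : Summable fun l : Zd d => (matMul B)^[i] B n l * B l m := by
        refine Summable.of_norm ?_
        simpa using
          hgen (ε * (Esum d δ * ε) ^ i) ε (hu0 i) hε0 _ B (fun a b => hWe i a b) hBabs n m
      calc (∑' l : Zd d, (matMul B)^[i] B n l * X l m)
          = ∑' l : Zd d, ((matMul B)^[i] B n l * idMat d l m -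
              (matMul B)^[i] B n l * B l m) := tsum_congr fun l => by rw [hXl l]; ring
        _ = (∑' l : Zd d, (matMul B)^[i] B n l * idMat d l m) -
              ∑' l : Zd d, (matMul B)^[i] B n l * B l m := Summable.tsum_sub hid hWB
        _ = (matMul B)^[i] B n m - (matMul B)^[i + 1] B n m := by
            congr 1
            · rw [tsum_eq_single m (fun b hb => by simp [idMat, hb])]
              simp [idMat]
            · have h1 : (∑' l : Zd d, (matMul B)^[i] B n l * B l m) =
                  matMul ((matMul B)^[i] B) B n m := rfl
              rw [h1, hcomm i, Function.iterate_succ_apply']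
    have htel : (∑' i : ℕ, ((matMul B)^[i] B n m - (matMul B)^[i + 1] B n m)) = B n m :=
      telescope (hWc n m)
    calc (∑' l : Zd d, (idMat d n l + ∑' i, (matMul B)^[i] B n l) * X l m)
        = (∑' l : Zd d, idMat d n l * X l m) +
            ∑' l : Zd d, (∑' i, (matMul B)^[i] B n l) * X l m := hsplit
      _ = X n m + ∑' l : Zd d, ∑' i : ℕ, (matMul B)^[i] B n l * X l m := by
          rw [hfirst]
          congr 1
          exact tsum_congr fun l => tsum_mul_right.symm
      _ = X n m + ∑' i : ℕ, ∑' l : Zd d, (matMul B)^[i] B n l * X l m := by rw [hswap]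
      _ = X n m + ∑' i : ℕ, ((matMul B)^[i] B n m - (matMul B)^[i + 1] B n m) := by
          rw [tsum_congr hinner]
      _ = X n m + B n m := by rw [htel]
      _ = idMat d n m := by simp only [hB, hA]; ring
  · -- finiteness
    simp only [add_sub_cancel_left]
    exact ne_top_of_le_ne_top ENNReal.ofReal_ne_top (matNorm_of_good hGS)
  · -- the estimate
    simp only [add_sub_cancel_left]
    have h6 : (matNorm lam (α - δ) (fun n m => ∑' i, (matMul B)^[i] B n m)).toReal ≤ cY :=
      ENNReal.toReal_le_of_le_ofReal hcY0 (matNorm_of_good hGS)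
    refine le_trans h6 ?_
    have h1r : 0 < 1 - Esum d δ * ε := by linarith
    have h1K : 0 < 1 - (3 / δ) ^ d * ε := by linarith
    calc cY = ε / (1 - Esum d δ * ε) := by rw [hcY, div_eq_mul_inv]
      _ ≤ ε / (1 - (3 / δ) ^ d * ε) := by
          rw [div_le_div_iff₀ h1r h1K]
          nlinarith [mul_le_mul_of_nonneg_left
            (by linarith : 1 - (3 / δ) ^ d * ε ≤ 1 - Esum d δ * ε) hε0]
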